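/- Let N ≥ 1, α, β > −1, and let z_1 < ... < z_N be the ordered zeros of the Jacobi polynomial P_N^{(α,β)}. Let S̃ be the N×N matrix with entries s̃_{j,j} = 4Σ_{l≠j}(1−z_j²)/(z_j−z_l)² + 2(α+1)(1+z_j)/(1−z_j) + 2(β+1)(1−z_j)/(1+z_j) and s̃_{i,j} = −4√((1−z_i²)(1−z_j²))/(z_i−z_j)² for i ≠ j. Then for every k = 2, ..., N there exists a real polynomial p_k of degree at most k−2 such that the vector v_k = (z_1^{k−1}√(1−z_1²), ..., z_N^{k−1}√(1−z_N²))^T satisfies (S̃ v_k)_i = (2k(2N+α+β+1−k)·z_i^{k−1} + p_k(z_i))·√(1−z_i²) for all i = 1, ..., N. -/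

import Mathlib

open MeasureTheory Filter Real Finset Topology Polynomial

private noncomputable def Kp (n : ℕ) (x y : ℝ) : ℝ :=
  ∑ i ∈ Finset.range n, (i + 1 : ℝ) * x ^ i * y ^ (n - 1 - i)

private lemma Kp_mul (m : ℕ) (x y : ℝ) :
    Kp (m + 1) x y * (x - y) =
      (m + 2) * x ^ (m + 1) - ∑ i ∈ Finset.range (m + 2), x ^ i * y ^ (m + 1 - i) := by
  induction m with
  | zero => simp [Kp, Finset.sum_range_succ]; ring
  | succ t ih =>
      have hK : Kp (t + 2) x y = y * Kp (t + 1) x y + (t + 2) * x ^ (t + 1) := by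
        rw [Kp, Kp, Finset.sum_range_succ, Finset.mul_sum]
        congr 1
        · refine Finset.sum_congr rfl fun i hi => ?_
          have hi' : i ≤ t := by simpa [Nat.lt_succ_iff] using hi
          have : t + 2 - 1 - i = (t + 1 - 1 - i) + 1 := by omega
          rw [this, pow_succ]
          ring
        · have : t + 2 - 1 - (t + 1) = 0 := by omega
          rw [this]
          push_cast
          ring
      have hG : (∑ i ∈ Finset.range (t + 3), x ^ i * y ^ (t + 2 - i))
          = y * (∑ i ∈ Finset.range (t + 2), x ^ i * y ^ (t + 1 - i)) + x ^ (t + 2) := by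
        rw [Finset.sum_range_succ, Finset.mul_sum]
        congr 1
        · refine Finset.sum_congr rfl fun i hi => ?_
          have hi' : i ≤ t + 1 := by simpa [Nat.lt_succ_iff] using hi
          have : t + 2 - i = (t + 1 - i) + 1 := by omega
          rw [this, pow_succ]
          ring
        · simp
      rw [hK]
      push_cast
      push_cast at ih hG
      rw [hG]
      linear_combination y * ih

private lemma pow_ident (n : ℕ) (x y : ℝ) :
    x ^ (n + 1) - y ^ (n + 1) = (n + 1) * x ^ n * (x - y) - Kp n x y * (x - y) ^ 2 := by
  cases n with
  | zero => simp [Kp]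
  | succ t =>
      have hA := Kp_mul t x y
      have hB := geom_sum₂_mul x y (t + 2)
      have he : ∀ i : ℕ, t + 2 - 1 - i = t + 1 - i := fun i => rfl
      simp only [he] at hB
      push_cast at hA hB ⊢
      linear_combination (x - y) * hA - hB

private lemma Kp_diag (n : ℕ) (x : ℝ) : Kp n x x = n * (n + 1) * x ^ (n - 1) / 2 := by
  have h1 : Kp n x x = (∑ i ∈ Finset.range n, ((i : ℝ) + 1)) * x ^ (n - 1) := by
    rw [Kp, Finset.sum_mul]
    refine Finset.sum_congr rfl fun i hi => ?_
    have hi' : i < n := Finset.mem_range.mp hi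
    have : i + (n - 1 - i) = n - 1 := by omega
    rw [mul_assoc, ← pow_add, this]
  have h2 : (∑ i ∈ Finset.range n, ((i : ℝ) + 1)) = n * (n + 1) / 2 := by
    have h5 : (∑ i ∈ Finset.range (n + 1), i) * 2 = (n + 1) * n := by
      simpa using Finset.sum_range_id_mul_two (n + 1)
    have h3 : (∑ i ∈ Finset.range n, (i + 1)) = ∑ i ∈ Finset.range (n + 1), i := by
      rw [Finset.sum_range_succ' (fun i => i) n]
      simp
    have h4 : ((∑ i ∈ Finset.range n, (i + 1) : ℕ) : ℝ) = ∑ i ∈ Finset.range n, ((i : ℝ) + 1) := by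
      push_cast; rfl
    have h6 : ((∑ i ∈ Finset.range (n + 1), i : ℕ) : ℝ) * 2 = ((n : ℝ) + 1) * n := by
      exact_mod_cast h5
    rw [← h4, h3]
    linarith
  rw [h1, h2]; ring


private lemma weight_integrable {α β : ℝ} (hα : -1 < α) (hβ : -1 < β) :
    IntegrableOn (fun x : ℝ => (1 - x) ^ α * (1 + x) ^ β) (Set.Ioo (-1 : ℝ) 1) := by
  have hsplit : Set.Ioo (-1 : ℝ) 1 = Set.Ioo (-1) 0 ∪ Set.Ico 0 1 :=
    (Set.Ioo_union_Ico_eq_Ioo (by norm_num) (by norm_num)).symm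
  have hcm : ∀ s : Set ℝ, s ⊆ Set.Ioo (-1 : ℝ) 1 → MeasurableSet s →
      AEStronglyMeasurable (fun x : ℝ => (1 - x) ^ α * (1 + x) ^ β)
        (volume.restrict s) := by
    intro s hs hms
    have hc : ContinuousOn (fun x : ℝ => (1 - x) ^ α * (1 + x) ^ β) s := by
      apply ContinuousOn.mul
      · exact (continuousOn_const.sub continuousOn_id).rpow_const
          (fun x hx => Or.inl (by have := (hs hx).2; dsimp; linarith))
      · exact (continuousOn_const.add continuousOn_id).rpow_const
          (fun x hx => Or.inl (by have := (hs hx).1; dsimp; linarith))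
    exact hc.aestronglyMeasurable hms
  rw [hsplit]
  apply MeasureTheory.IntegrableOn.union
  · -- on Ioo (-1) 0
    have h1 : IntervalIntegrable (fun x : ℝ => x ^ β) volume 0 1 :=
      intervalIntegral.intervalIntegrable_rpow' hβ
    have h2 : IntervalIntegrable (fun x : ℝ => (1 + x) ^ β) volume (-1) 0 := by
      have := h1.comp_add_right 1
      norm_num at this
      refine this.congr (fun x _ => ?_) -- maybe not needed
      beta_reduce; rw [add_comm]
    have h3 : IntegrableOn (fun x : ℝ => (1 + x) ^ β) (Set.Ioo (-1 : ℝ) 0) := by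
      have := (intervalIntegrable_iff_integrableOn_Ioc_of_le (by norm_num : (-1:ℝ) ≤ 0)).mp h2
      exact (integrableOn_Ioc_iff_integrableOn_Ioo).mp this
    apply Integrable.mono' (h3.const_mul (2 ^ α + 1))
    · exact hcm _ (Set.Ioo_subset_Ioo le_rfl (by norm_num)) measurableSet_Ioo
    · rw [ae_restrict_iff' measurableSet_Ioo]
      filter_upwards with x hx
      have h1x : (0:ℝ) < 1 - x := by have := hx.2; linarith
      have h2x : (0:ℝ) < 1 + x := by have := hx.1; linarith
      rw [Real.norm_eq_abs, abs_of_nonneg (by positivity)]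
      have hb : (1 - x) ^ α ≤ 2 ^ α + 1 := by
        rcases le_or_gt 0 α with h | h
        · have : (1 - x) ^ α ≤ 2 ^ α :=
            Real.rpow_le_rpow (by linarith) (by have := hx.1; linarith) h
          linarith
        · have : (1 - x) ^ α ≤ 1 :=
            Real.rpow_le_one_of_one_le_of_nonpos (by have := hx.2; linarith) h.le
          have h2 : (0:ℝ) < 2 ^ α := Real.rpow_pos_of_pos (by norm_num) α
          linarith
      exact mul_le_mul_of_nonneg_right hb (Real.rpow_nonneg h2x.le β) |>.trans le_rfl
  · -- on Ico 0 1
    have h1 : IntervalIntegrable (fun x : ℝ => x ^ α) volume 0 1 :=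
      intervalIntegral.intervalIntegrable_rpow' hα
    have h2 : IntervalIntegrable (fun x : ℝ => (1 - x) ^ α) volume 0 1 := by
      have := (h1.comp_sub_left 1).symm
      norm_num at this
      exact this
    have h3 : IntegrableOn (fun x : ℝ => (1 - x) ^ α) (Set.Ioo (0 : ℝ) 1) := by
      have := (intervalIntegrable_iff_integrableOn_Ioc_of_le (by norm_num : (0:ℝ) ≤ 1)).mp h2
      exact (integrableOn_Ioc_iff_integrableOn_Ioo).mp this
    have h4 : IntegrableOn (fun x : ℝ => (1 - x) ^ α) (Set.Ico (0 : ℝ) 1) :=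
      (integrableOn_Ico_iff_integrableOn_Ioo).mpr h3
    apply Integrable.mono' (h4.const_mul (2 ^ β + 1))
    · exact hcm _ (fun x hx => ⟨by have := hx.1; linarith, hx.2⟩) measurableSet_Ico
    · rw [ae_restrict_iff' measurableSet_Ico]
      filter_upwards with x hx
      have h1x : (0:ℝ) < 1 - x := by have := hx.2; linarith
      have h2x : (0:ℝ) < 1 + x := by have := hx.1; linarith
      rw [Real.norm_eq_abs, abs_of_nonneg (by positivity)]
      have hb : (1 + x) ^ β ≤ 2 ^ β + 1 := by
        rcases le_or_gt 0 β with h | h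
        · have : (1 + x) ^ β ≤ 2 ^ β :=
            Real.rpow_le_rpow (by linarith) (by have := hx.2; linarith) h
          linarith
        · have : (1 + x) ^ β ≤ 1 :=
            Real.rpow_le_one_of_one_le_of_nonpos (by have := hx.1; linarith) h.le
          have h2 : (0:ℝ) < 2 ^ β := Real.rpow_pos_of_pos (by norm_num) β
          linarith
      calc (1 - x) ^ α * (1 + x) ^ β ≤ (1 - x) ^ α * (2 ^ β + 1) :=
            mul_le_mul_of_nonneg_left hb (Real.rpow_nonneg h1x.le α)
        _ = (2 ^ β + 1) * (1 - x) ^ α := by ring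

private lemma poly_weight_integrable {α β : ℝ} (hα : -1 < α) (hβ : -1 < β) (A : Polynomial ℝ) :
    IntegrableOn (fun x : ℝ => A.eval x * ((1 - x) ^ α * (1 + x) ^ β))
      (Set.Ioo (-1 : ℝ) 1) := by
  obtain ⟨C, hC⟩ := (isCompact_Icc (a := (-1:ℝ)) (b := 1)).exists_bound_of_continuousOn
    (Polynomial.continuous A).continuousOn
  apply Integrable.mono' ((weight_integrable hα hβ).const_mul C)
  · have hc : ContinuousOn (fun x : ℝ => A.eval x * ((1 - x) ^ α * (1 + x) ^ β))
        (Set.Ioo (-1:ℝ) 1) := by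
      apply (Polynomial.continuous A).continuousOn.mul
      apply ContinuousOn.mul
      · exact (continuousOn_const.sub continuousOn_id).rpow_const
          (fun x hx => Or.inl (by have := hx.2; dsimp; linarith))
      · exact (continuousOn_const.add continuousOn_id).rpow_const
          (fun x hx => Or.inl (by have := hx.1; dsimp; linarith))
    exact hc.aestronglyMeasurable measurableSet_Ioo
  · rw [ae_restrict_iff' measurableSet_Ioo]
    filter_upwards with x hx
    have h1x : (0:ℝ) < 1 - x := by have := hx.2; linarith
    have h2x : (0:ℝ) < 1 + x := by have := hx.1; linarith
    have hw : (0:ℝ) ≤ (1 - x) ^ α * (1 + x) ^ β := by positivity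
    rw [norm_mul]
    rw [Real.norm_eq_abs ((1 - x) ^ α * (1 + x) ^ β), abs_of_nonneg hw]
    exact mul_le_mul_of_nonneg_right
      (hC x ⟨hx.1.le, hx.2.le⟩) hw


private lemma star_identity {α β : ℝ} (hα : -1 < α) (hβ : -1 < β) (G : Polynomial ℝ) :
    ∫ x in Set.Ioo (-1 : ℝ) 1,
      (((Polynomial.C (β - α) - Polynomial.C (α + β + 2) * Polynomial.X) * G
          + (1 - Polynomial.X ^ 2) * Polynomial.derivative G).eval x)
        * ((1 - x) ^ α * (1 + x) ^ β) = 0 := by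
  set D : Polynomial ℝ := (Polynomial.C (β - α) - Polynomial.C (α + β + 2) * Polynomial.X) * G
      + (1 - Polynomial.X ^ 2) * Polynomial.derivative G with hD
  set F : ℝ → ℝ := fun x => (1 - x) ^ (α + 1) * (1 + x) ^ (β + 1) * G.eval x with hF
  have hcont : ContinuousOn F (Set.Icc (-1 : ℝ) 1) := by
    apply ContinuousOn.mul
    apply ContinuousOn.mul
    · exact (continuousOn_const.sub continuousOn_id).rpow_const
        (fun x _ => Or.inr (by linarith))
    · exact (continuousOn_const.add continuousOn_id).rpow_const
        (fun x _ => Or.inr (by linarith))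
    · exact (Polynomial.continuous G).continuousOn
  have hderiv : ∀ x ∈ Set.Ioo (-1 : ℝ) 1,
      HasDerivAt F (D.eval x * ((1 - x) ^ α * (1 + x) ^ β)) x := by
    intro x hx
    have h1x : (0:ℝ) < 1 - x := by have := hx.2; linarith
    have h2x : (0:ℝ) < 1 + x := by have := hx.1; linarith
    have hu : HasDerivAt (fun y : ℝ => (1 - y) ^ (α + 1)) (-(α + 1) * (1 - x) ^ α) x := by
      have houter : HasDerivAt (fun t : ℝ => t ^ (α + 1)) ((α + 1) * (1 - x) ^ α) (1 - x) := by
        have := Real.hasDerivAt_rpow_const (x := 1 - x) (p := α + 1) (Or.inl h1x.ne')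
        simpa [add_sub_cancel_right] using this
      have hinner : HasDerivAt (fun y : ℝ => 1 - y) (-1) x := by
        simpa using (hasDerivAt_id x).const_sub 1
      have := houter.comp x hinner
      exact this.congr_deriv (by ring)
    have hv : HasDerivAt (fun y : ℝ => (1 + y) ^ (β + 1)) ((β + 1) * (1 + x) ^ β) x := by
      have houter : HasDerivAt (fun t : ℝ => t ^ (β + 1)) ((β + 1) * (1 + x) ^ β) (1 + x) := by
        have := Real.hasDerivAt_rpow_const (x := 1 + x) (p := β + 1) (Or.inl h2x.ne')
        simpa [add_sub_cancel_right] using this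
      have hinner : HasDerivAt (fun y : ℝ => 1 + y) (1) x := by
        simpa using (hasDerivAt_id x).const_add 1
      have := houter.comp x hinner
      exact this.congr_deriv (by ring)
    have hg : HasDerivAt (fun y : ℝ => G.eval y) ((Polynomial.derivative G).eval x) x :=
      G.hasDerivAt x
    have hprod := (hu.mul hv).mul hg
    refine HasDerivAt.congr_deriv hprod ?_
    symm
    have e1 : (1 - x) ^ (α + 1) = (1 - x) ^ α * (1 - x) := Real.rpow_add_one h1x.ne' α
    have e2 : (1 + x) ^ (β + 1) = (1 + x) ^ β * (1 + x) := Real.rpow_add_one h2x.ne' β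
    rw [hD]
    simp only [Polynomial.eval_add, Polynomial.eval_mul, Polynomial.eval_sub,
      Polynomial.eval_one, Polynomial.eval_pow, Polynomial.eval_X, Polynomial.eval_C, Pi.mul_apply]
    rw [e1, e2]
    ring
  have hint : IntervalIntegrable (fun x => D.eval x * ((1 - x) ^ α * (1 + x) ^ β))
      volume (-1 : ℝ) 1 := by
    rw [intervalIntegrable_iff_integrableOn_Ioc_of_le (by norm_num : (-1:ℝ) ≤ 1)]
    rw [integrableOn_Ioc_iff_integrableOn_Ioo]
    exact poly_weight_integrable hα hβ D
  have hF1 : F 1 = 0 := by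
    rw [hF]; simp [Real.zero_rpow (by linarith : α + 1 ≠ 0)]
  have hFm1 : F (-1) = 0 := by
    rw [hF]; simp [Real.zero_rpow (by linarith : β + 1 ≠ 0)]
  have hFTC := intervalIntegral.integral_eq_sub_of_hasDeriv_right_of_le (by norm_num : (-1:ℝ) ≤ 1)
    hcont (fun x hx => (hderiv x hx).hasDerivWithinAt) hint
  rw [hF1, hFm1, sub_zero] at hFTC
  rw [intervalIntegral.integral_of_le (by norm_num : (-1:ℝ) ≤ 1)] at hFTC
  rw [← MeasureTheory.integral_Ioc_eq_integral_Ioo]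
  exact hFTC


private noncomputable def Jint (α β : ℝ) (A : Polynomial ℝ) : ℝ :=
  ∫ x in Set.Ioo (-1 : ℝ) 1, A.eval x * ((1 - x) ^ α * (1 + x) ^ β)

private lemma star_identity_J {α β : ℝ} (hα : -1 < α) (hβ : -1 < β) (G : Polynomial ℝ) :
    Jint α β ((Polynomial.C (β - α) - Polynomial.C (α + β + 2) * Polynomial.X) * G
          + (1 - Polynomial.X ^ 2) * Polynomial.derivative G) = 0 := by
  unfold Jint
  exact star_identity hα hβ G

private lemma Jint_add {α β : ℝ} (hα : -1 < α) (hβ : -1 < β) (A B : Polynomial ℝ) :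
    Jint α β (A + B) = Jint α β A + Jint α β B := by
  unfold Jint
  simp only [Polynomial.eval_add, add_mul]
  exact MeasureTheory.integral_add (poly_weight_integrable hα hβ A)
    (poly_weight_integrable hα hβ B)

private lemma Jint_smul (α β : ℝ) (a : ℝ) (A : Polynomial ℝ) :
    Jint α β (Polynomial.C a * A) = a * Jint α β A := by
  unfold Jint
  simp only [Polynomial.eval_mul, Polynomial.eval_C, mul_assoc]
  exact MeasureTheory.integral_const_mul a _

private lemma Jint_zero_of_sq {α β : ℝ} (hα : -1 < α) (hβ : -1 < β) (A : Polynomial ℝ)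
    (h : Jint α β (A * A) = 0) : A = 0 := by
  by_contra hA
  have hint := poly_weight_integrable hα hβ (A * A)
  have hnn : 0 ≤ᵐ[volume.restrict (Set.Ioo (-1 : ℝ) 1)]
      fun x => (A * A).eval x * ((1 - x) ^ α * (1 + x) ^ β) := by
    filter_upwards [ae_restrict_mem measurableSet_Ioo] with x hx
    simp only [Pi.zero_apply]
    have h1x : (0:ℝ) < 1 - x := by have := hx.2; linarith
    have h2x : (0:ℝ) < 1 + x := by have := hx.1; linarith
    simp only [Polynomial.eval_mul]
    have := mul_self_nonneg (A.eval x)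
    positivity
  have hae := (MeasureTheory.integral_eq_zero_iff_of_nonneg_ae hnn hint).mp h
  rw [Filter.EventuallyEq, ae_restrict_iff' measurableSet_Ioo, ae_iff] at hae
  have hnull : volume (Set.Ioo (-1 : ℝ) 1 \ {x | Polynomial.IsRoot A x}) = 0 := by
    refine measure_mono_null ?_ hae
    intro x hx
    have hmem := hx.1
    have hroot : Polynomial.eval x A ≠ 0 := hx.2
    have h1x : (0:ℝ) < 1 - x := by have := hmem.2; linarith
    have h2x : (0:ℝ) < 1 + x := by have := hmem.1; linarith
    simp only [Set.mem_setOf_eq, Pi.zero_apply]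
    intro hcon
    have hval := hcon hmem
    simp only [Polynomial.eval_mul] at hval
    have hw : (0:ℝ) < (1 - x) ^ α * (1 + x) ^ β := by positivity
    exact (mul_ne_zero (mul_ne_zero hroot hroot) hw.ne') hval
  have hfin : (volume {x | Polynomial.IsRoot A x}) = 0 :=
    (Polynomial.finite_setOf_isRoot hA).measure_zero volume
  have hzero : volume (Set.Ioo (-1 : ℝ) 1) = 0 := by
    have hle := measure_union_le (μ := volume)
      (Set.Ioo (-1 : ℝ) 1 \ {x | Polynomial.IsRoot A x}) {x | Polynomial.IsRoot A x}
    rw [hnull, hfin, add_zero] at hle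
    refine le_antisymm (le_trans (measure_mono ?_) hle) zero_le
    intro x hx
    by_cases hr : Polynomial.IsRoot A x
    · exact Set.mem_union_right _ hr
    · exact Set.mem_union_left _ ⟨hx, hr⟩
  rw [Real.volume_Ioo] at hzero
  norm_num at hzero

private lemma deriv_prod_linear {ι : Type*} [DecidableEq ι] (s : Finset ι) (a : ι → ℝ) :
    Polynomial.derivative (∏ j ∈ s, (Polynomial.X - Polynomial.C (a j))) =
      ∑ j ∈ s, ∏ l ∈ s.erase j, (Polynomial.X - Polynomial.C (a l)) := by
  induction s using Finset.induction_on with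
  | empty => simp
  | @insert i s hi ih =>
      rw [Finset.prod_insert hi, derivative_mul, derivative_X_sub_C, one_mul, ih,
        Finset.sum_insert hi, Finset.erase_insert hi, Finset.mul_sum]
      congr 1
      refine Finset.sum_congr rfl fun j hj => ?_
      rw [Finset.erase_insert_of_ne (fun h => hi (by rw [h]; exact hj)),
        Finset.prod_insert (fun h => hi (Finset.mem_of_mem_erase h))]

private lemma ode_at_roots {N : ℕ} (hN2 : 2 ≤ N) {α β : ℝ} (hα : -1 < α) (hβ : -1 < β)
    (P : Polynomial ℝ) (hPdeg : P.natDegree = N)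
    (hPorth : ∀ Q : Polynomial ℝ, Q.natDegree < N →
      ∫ x in Set.Ioo (-1 : ℝ) 1,
        P.eval x * Q.eval x * (1 - x) ^ α * (1 + x) ^ β = 0)
    (hPne : P ≠ 0)
    (z : Fin N → ℝ) (hzinj : Function.Injective z)
    (hzroot : ∀ i, P.eval (z i) = 0)
    (i : Fin N) :
    (1 - z i ^ 2) * (∑ j ∈ Finset.univ.erase i, (z i - z j)⁻¹)
      = (α - β + (α + β + 2) * z i) / 2 := by
  classical
  -- J-form of orthogonality
  have horth : ∀ Q : Polynomial ℝ, Q.natDegree < N → Jint α β (P * Q) = 0 := by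
    intro Q hQ
    have hpt : ∀ x : ℝ, (P * Q).eval x * ((1 - x) ^ α * (1 + x) ^ β)
        = P.eval x * Q.eval x * (1 - x) ^ α * (1 + x) ^ β := by
      intro x; simp only [Polynomial.eval_mul]; ring
    unfold Jint
    simp only [hpt]
    exact hPorth Q hQ
  set L : Polynomial ℝ → Polynomial ℝ := fun A =>
    (1 - Polynomial.X ^ 2) * Polynomial.derivative (Polynomial.derivative A)
      + (Polynomial.C (β - α) - Polynomial.C (α + β + 2) * Polynomial.X)
        * Polynomial.derivative A with hL
  have hd1 : ∀ A : Polynomial ℝ, Polynomial.derivative A ≠ 0 → 1 ≤ A.natDegree := by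
    intro A hA
    by_contra h
    push_neg at h
    interval_cases hn : A.natDegree
    · exact hA (by rw [Polynomial.eq_C_of_natDegree_eq_zero hn]; simp)
  have hLdeg : ∀ A : Polynomial ℝ, (L A).natDegree ≤ A.natDegree := by
    intro A
    rw [hL]
    refine (Polynomial.natDegree_add_le _ _).trans (max_le ?_ ?_)
    · by_cases h2 : Polynomial.derivative (Polynomial.derivative A) = 0
      · simp [h2]
      · have hA' : Polynomial.derivative A ≠ 0 := by
          intro h; exact h2 (by rw [h]; simp)
        have e1 : 1 ≤ A.natDegree := hd1 A hA'
        have e2 : 1 ≤ (Polynomial.derivative A).natDegree := hd1 _ h2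
        have e3 := Polynomial.natDegree_derivative_le A
        have e4 := Polynomial.natDegree_derivative_le (Polynomial.derivative A)
        refine (Polynomial.natDegree_mul_le).trans ?_
        have e5 : (1 - Polynomial.X ^ 2 : Polynomial ℝ).natDegree ≤ 2 := by
          compute_degree
        omega
    · by_cases h2 : Polynomial.derivative A = 0
      · simp [h2]
      · have e1 : 1 ≤ A.natDegree := hd1 A h2
        have e3 := Polynomial.natDegree_derivative_le A
        refine (Polynomial.natDegree_mul_le).trans ?_
        have e5 : (Polynomial.C (β - α)
            - Polynomial.C (α + β + 2) * Polynomial.X : Polynomial ℝ).natDegree ≤ 1 := by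
          compute_degree
        omega
  have horthL : ∀ Q : Polynomial ℝ, Q.natDegree < N → Jint α β (L P * Q) = 0 := by
    intro Q hQ
    have key : ∀ A B : Polynomial ℝ,
        Jint α β (L A * B) = - Jint α β ((1 - Polynomial.X ^ 2)
          * Polynomial.derivative A * Polynomial.derivative B) := by
      intro A B
      have hid : (Polynomial.C (β - α) - Polynomial.C (α + β + 2) * Polynomial.X)
            * (Polynomial.derivative A * B)
          + (1 - Polynomial.X ^ 2) * Polynomial.derivative (Polynomial.derivative A * B)
          = L A * B + (1 - Polynomial.X ^ 2)
            * Polynomial.derivative A * Polynomial.derivative B := by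
        rw [hL, derivative_mul]
        ring
      have := star_identity_J hα hβ (Polynomial.derivative A * B)
      rw [hid, Jint_add hα hβ] at this
      linarith
    rw [key P Q]
    have h2 := key Q P
    have h3 : Jint α β (L Q * P) = 0 := by
      rw [show L Q * P = P * L Q by ring]
      exact horth (L Q) (lt_of_le_of_lt (hLdeg Q) hQ)
    have h4 : (1 - Polynomial.X ^ 2) * Polynomial.derivative Q * Polynomial.derivative P
        = (1 - Polynomial.X ^ 2) * Polynomial.derivative P * Polynomial.derivative Q := by ring
    rw [h4] at h2
    linarith
  -- the combination R
  set cN : ℝ := (N : ℝ) * ((N : ℝ) + α + β + 1) with hcN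
  set R : Polynomial ℝ := L P + Polynomial.C cN * P with hR
  have hcoeffN : R.coeff N = 0 := by
    have hd1' := Polynomial.natDegree_derivative_le P
    have hd2' := Polynomial.natDegree_derivative_le (Polynomial.derivative P)
    rw [hPdeg] at hd1'
    have hA2 : (Polynomial.derivative (Polynomial.derivative P)).coeff N = 0 :=
      Polynomial.coeff_eq_zero_of_natDegree_lt (by omega)
    have hP'N : (Polynomial.derivative P).coeff N = 0 :=
      Polynomial.coeff_eq_zero_of_natDegree_lt (by omega)
    have c1 : ((N - 2 : ℕ) : ℝ) = (N : ℝ) - 2 := by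
      push_cast [Nat.cast_sub hN2]; ring
    have c2 : ((N - 1 : ℕ) : ℝ) = (N : ℝ) - 1 := by
      push_cast [Nat.cast_sub (show 1 ≤ N by omega)]; ring
    have e1 : ((Polynomial.X ^ 2) * Polynomial.derivative (Polynomial.derivative P)).coeff N
        = ((N : ℝ) - 1) * ((N : ℝ) * P.coeff N) := by
      have h := Polynomial.coeff_X_pow_mul (Polynomial.derivative (Polynomial.derivative P))
        2 (N - 2)
      rw [show N - 2 + 2 = N by omega] at h
      rw [h, Polynomial.coeff_derivative, Polynomial.coeff_derivative]
      rw [show N - 2 + 1 = N - 1 by omega, show N - 1 + 1 = N by omega, c1, c2]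
      ring
    have e2 : (Polynomial.X * Polynomial.derivative P).coeff N = (N : ℝ) * P.coeff N := by
      rw [mul_comm]
      have h := Polynomial.coeff_mul_X (Polynomial.derivative P) (N - 1)
      rw [show N - 1 + 1 = N by omega] at h
      rw [h, Polynomial.coeff_derivative, show N - 1 + 1 = N by omega, c2]
      ring
    simp only [hR, hL]
    simp only [Polynomial.coeff_add, Polynomial.coeff_C_mul]
    rw [sub_mul, one_mul, sub_mul, Polynomial.coeff_sub, Polynomial.coeff_sub, mul_assoc,
      Polynomial.coeff_C_mul, Polynomial.coeff_C_mul, hA2, e1, e2, hP'N, hcN]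
    ring
  have hRdegle : R.natDegree ≤ N := by
    rw [hR]
    refine (Polynomial.natDegree_add_le _ _).trans (max_le ((hLdeg P).trans hPdeg.le) ?_)
    exact (Polynomial.natDegree_C_mul_le _ _).trans hPdeg.le
  have hR0 : R = 0 := by
    by_contra hR0
    have hRlt : R.natDegree < N := by
      rcases lt_or_eq_of_le hRdegle with h | h
      · exact h
      · exfalso
        apply Polynomial.leadingCoeff_ne_zero.mpr hR0
        rw [Polynomial.leadingCoeff, h]
        exact hcoeffN
    have hJRR : Jint α β (R * R) = 0 := by
      have hsplit : R * R = L P * R + Polynomial.C cN * (P * R) := by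
        rw [hR]; ring
      rw [hsplit, Jint_add hα hβ, horthL R hRlt, Jint_smul, horth R hRlt]
      ring
    exact hR0 (Jint_zero_of_sq hα hβ R hJRR)
  -- pointwise ODE
  have hODE : ∀ x : ℝ, (1 - x ^ 2) * (Polynomial.derivative (Polynomial.derivative P)).eval x
      + (β - α - (α + β + 2) * x) * (Polynomial.derivative P).eval x
      + cN * P.eval x = 0 := by
    intro x
    have := congrArg (Polynomial.eval x) hR0
    rw [hR, hL] at this
    simp only [Polynomial.eval_add, Polynomial.eval_mul, Polynomial.eval_sub,
      Polynomial.eval_one, Polynomial.eval_pow, Polynomial.eval_X, Polynomial.eval_C,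
      Polynomial.eval_zero] at this
    linarith [this]
  -- factor P
  have hdvd : (∏ j : Fin N, (Polynomial.X - Polynomial.C (z j))) ∣ P :=
    Finset.prod_dvd_of_coprime
      ((Polynomial.pairwise_coprime_X_sub_C hzinj).set_pairwise _)
      (fun j _ => (Polynomial.dvd_iff_isRoot).mpr (hzroot j))
  obtain ⟨u, hu⟩ := hdvd
  have hprodne : (∏ j : Fin N, (Polynomial.X - Polynomial.C (z j))) ≠ 0 :=
    (Polynomial.monic_prod_of_monic _ _ fun j _ => Polynomial.monic_X_sub_C (z j)).ne_zero
  have hune : u ≠ 0 := by rintro rfl; rw [mul_zero] at hu; exact hPne hu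
  have hprodd : (∏ j : Fin N, (Polynomial.X - Polynomial.C (z j))).natDegree = N := by
    rw [Polynomial.natDegree_prod _ _ (fun j _ => Polynomial.X_sub_C_ne_zero (z j))]
    simp
  have hudeg : u.natDegree = 0 := by
    have := Polynomial.natDegree_mul hprodne hune
    rw [← hu, hPdeg, hprodd] at this
    omega
  have huC : u = Polynomial.C (u.coeff 0) := Polynomial.eq_C_of_natDegree_eq_zero hudeg
  set c0 : ℝ := u.coeff 0 with hc0
  have hc0ne : c0 ≠ 0 := by
    intro h
    apply hPne
    rw [hu, huC, h]
    simp
  -- split off root i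
  set x : ℝ := z i with hx
  set q : Polynomial ℝ := ∏ j ∈ Finset.univ.erase i, (Polynomial.X - Polynomial.C (z j)) with hq
  have hsplit : (∏ j : Fin N, (Polynomial.X - Polynomial.C (z j)))
      = (Polynomial.X - Polynomial.C x) * q :=
    (Finset.mul_prod_erase _ _ (Finset.mem_univ i)).symm
  have hP : P = (Polynomial.X - Polynomial.C x) * q * Polynomial.C c0 := by
    rw [hu, hsplit, huC]
  have hP' : Polynomial.derivative P
      = (q + (Polynomial.X - Polynomial.C x) * Polynomial.derivative q) * Polynomial.C c0 := by
    rw [hP]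
    simp only [derivative_mul, derivative_X_sub_C, derivative_C]
    ring
  have hP'' : Polynomial.derivative (Polynomial.derivative P)
      = (2 * Polynomial.derivative q
          + (Polynomial.X - Polynomial.C x) * Polynomial.derivative (Polynomial.derivative q))
        * Polynomial.C c0 := by
    rw [hP']
    simp only [derivative_mul, derivative_add, derivative_X_sub_C, derivative_C]
    ring
  -- evaluations at x
  have hqx : q.eval x ≠ 0 := by
    rw [hq, Polynomial.eval_prod]
    refine Finset.prod_ne_zero_iff.mpr fun j hj => ?_
    simp only [Polynomial.eval_sub, Polynomial.eval_X, Polynomial.eval_C]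
    have : z j ≠ x := fun h => (Finset.ne_of_mem_erase hj) (hzinj (h.trans hx))
    exact sub_ne_zero.mpr (Ne.symm this)
  have hq'x : (Polynomial.derivative q).eval x
      = q.eval x * (∑ j ∈ Finset.univ.erase i, (x - z j)⁻¹) := by
    rw [hq, deriv_prod_linear]
    rw [Polynomial.eval_finset_sum, Finset.mul_sum]
    refine Finset.sum_congr rfl fun j hj => ?_
    have hzj : x - z j ≠ 0 := by
      have : z j ≠ x := fun h => (Finset.ne_of_mem_erase hj) (hzinj (h.trans hx))
      exact sub_ne_zero.mpr (Ne.symm this)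
    rw [Polynomial.eval_prod]
    simp only [Polynomial.eval_sub, Polynomial.eval_X, Polynomial.eval_C]
    have hqeval : q.eval x = ∏ l ∈ Finset.univ.erase i, (x - z l) := by
      rw [hq, Polynomial.eval_prod]; simp
    rw [hqeval, eq_mul_inv_iff_mul_eq₀ hzj]
    exact Finset.prod_erase_mul (Finset.univ.erase i) (fun l => x - z l) hj
  have hode := hODE x
  rw [hP'', hP'] at hode
  have hPx : P.eval x = 0 := hzroot i
  simp only [Polynomial.eval_mul, Polynomial.eval_add, Polynomial.eval_sub,
    Polynomial.eval_X, Polynomial.eval_C, Polynomial.eval_one, Polynomial.eval_pow,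
    Polynomial.eval_ofNat, hPx, hq'x, sub_self, zero_mul, mul_zero, add_zero] at hode
  have hne : Polynomial.eval x q * c0 ≠ 0 := mul_ne_zero hqx hc0ne
  have h2 : ((1 - x ^ 2) * (2 * (∑ j ∈ Finset.univ.erase i, (x - z j)⁻¹))
      + (β - α - (α + β + 2) * x)) * (Polynomial.eval x q * c0) = 0 := by
    linear_combination hode
  rcases mul_eq_zero.mp h2 with h3 | h3
  · linarith
  · exact absurd h3 hne


private lemma Kp_sum {N : ℕ} (n : ℕ) (x : ℝ) (z : Fin N → ℝ) :
    ∑ j : Fin N, Kp n x (z j)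
      = ∑ t ∈ Finset.range n, (((t : ℝ) + 1) * (∑ j : Fin N, z j ^ (n - 1 - t))) * x ^ t := by
  unfold Kp
  rw [Finset.sum_comm]
  refine Finset.sum_congr rfl fun t _ => ?_
  rw [mul_comm (((t : ℝ) + 1) * (∑ j : Fin N, z j ^ (n - 1 - t))) (x ^ t), Finset.mul_sum,
    Finset.mul_sum]
  exact Finset.sum_congr rfl fun j _ => by ring

theorem trig_jacobi_matrix_higher_eigenvector_step
    (N : ℕ) (hN : 1 ≤ N) (α β : ℝ) (hα : -1 < α) (hβ : -1 < β)
    (P : Polynomial ℝ) (hPdeg : P.natDegree = N)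
    (hPorth : ∀ Q : Polynomial ℝ, Q.natDegree < N →
      ∫ x in Set.Ioo (-1 : ℝ) 1,
        P.eval x * Q.eval x * (1 - x) ^ α * (1 + x) ^ β = 0)
    (hPone : P.eval 1 = (∏ j ∈ Finset.range N, (α + 1 + j)) / (N.factorial : ℝ))
    (z : Fin N → ℝ) (hzmono : StrictMono z)
    (hzroot : ∀ i, P.eval (z i) = 0)
    (hzmem : ∀ i, z i ∈ Set.Ioo (-1 : ℝ) 1)
    (S : Matrix (Fin N) (Fin N) ℝ)
    (hS : S = Matrix.of fun i j =>
      if i = j then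
        4 * (∑ l ∈ Finset.univ.erase j, (1 - z j ^ 2) / (z j - z l) ^ 2) +
          2 * (α + 1) * ((1 + z j) / (1 - z j)) + 2 * (β + 1) * ((1 - z j) / (1 + z j))
      else -4 * Real.sqrt ((1 - z i ^ 2) * (1 - z j ^ 2)) / (z i - z j) ^ 2)
    : ∀ k : ℕ, 2 ≤ k → k ≤ N →
      ∃ p : Polynomial ℝ, p.natDegree ≤ k - 2 ∧
        ∀ i : Fin N,
          S.mulVec (fun i => z i ^ (k - 1) * Real.sqrt (1 - z i ^ 2)) i =
            (2 * (k : ℝ) * (2 * (N : ℝ) + α + β + 1 - (k : ℝ)) * z i ^ (k - 1) +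
              p.eval (z i)) * Real.sqrt (1 - z i ^ 2) := by
  intro k hk2 hkN
  obtain ⟨m, rfl⟩ : ∃ m, k = m + 2 := ⟨k - 2, by omega⟩
  have hN2 : 2 ≤ N := le_trans hk2 hkN
  have hzinj : Function.Injective z := hzmono.injective
  have hPne : P ≠ 0 := by
    intro h
    have h1 : P.eval 1 = 0 := by rw [h]; simp
    rw [hPone] at h1
    have hp : 0 < (∏ j ∈ Finset.range N, (α + 1 + j)) / (N.factorial : ℝ) := by
      apply div_pos
      · apply Finset.prod_pos
        intro j hj
        have : (0:ℝ) ≤ j := Nat.cast_nonneg j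
        linarith
      · exact_mod_cast Nat.factorial_pos N
    linarith
  refine ⟨Polynomial.C (2 * ((m:ℝ) + 1) * (α - β)) * Polynomial.X ^ m
    + Polynomial.C (2 * ((m:ℝ) + 1) * (m:ℝ)) * Polynomial.X ^ (m - 1)
    - Polynomial.C 4 * (∑ t ∈ Finset.range m,
        Polynomial.C (((t:ℝ) + 1) * (∑ j : Fin N, z j ^ (m - 1 - t))) * Polynomial.X ^ t)
    + Polynomial.C 4 * (∑ t ∈ Finset.range (m + 1),
        Polynomial.C (((t:ℝ) + 1) * (∑ j : Fin N, z j ^ (m + 1 - t))) * Polynomial.X ^ t),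
    ?_, ?_⟩
  · -- degree bound
    rw [show m + 2 - 2 = m from rfl]
    refine (Polynomial.natDegree_add_le _ _).trans (max_le ((Polynomial.natDegree_sub_le _ _).trans
      (max_le ((Polynomial.natDegree_add_le _ _).trans (max_le ?_ ?_)) ?_)) ?_)
    · exact Polynomial.natDegree_C_mul_X_pow_le _ m
    · exact (Polynomial.natDegree_C_mul_X_pow_le _ _).trans (by omega)
    · refine Polynomial.natDegree_mul_le.trans ?_
      rw [Polynomial.natDegree_C, zero_add]
      refine Polynomial.natDegree_sum_le_of_forall_le _ _ fun t ht => ?_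
      exact (Polynomial.natDegree_C_mul_X_pow_le _ _).trans
        (by have := Finset.mem_range.mp ht; omega)
    · refine Polynomial.natDegree_mul_le.trans ?_
      rw [Polynomial.natDegree_C, zero_add]
      refine Polynomial.natDegree_sum_le_of_forall_le _ _ fun t ht => ?_
      exact (Polynomial.natDegree_C_mul_X_pow_le _ _).trans
        (by have := Finset.mem_range.mp ht; omega)
  · intro i
    have hxm := hzmem i
    have h1x : (0:ℝ) < 1 - z i := by have := hxm.2; linarith
    have h2x : (0:ℝ) < 1 + z i := by have := hxm.1; linarith
    have hx2 : (0:ℝ) < 1 - z i ^ 2 := by nlinarith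
    have hzj2 : ∀ j : Fin N, (0:ℝ) < 1 - z j ^ 2 := by
      intro j
      have h := hzmem j
      nlinarith [h.1, h.2]
    have hne : ∀ j ∈ Finset.univ.erase i, z i - z j ≠ 0 := by
      intro j hj
      have : z j ≠ z i := fun h => (Finset.ne_of_mem_erase hj) (hzinj h)
      exact sub_ne_zero.mpr (Ne.symm this)
    simp only [show m + 2 - 1 = m + 1 from rfl]
    -- step 1 : LHS = T * sqrt(1 - z i ^ 2)
    have hmv : S.mulVec (fun j => z j ^ (m + 1) * Real.sqrt (1 - z j ^ 2)) i
        = ((4 * (∑ l ∈ Finset.univ.erase i, (1 - z i ^ 2) / (z i - z l) ^ 2)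
            + 2 * (α + 1) * ((1 + z i) / (1 - z i))
            + 2 * (β + 1) * ((1 - z i) / (1 + z i))) * z i ^ (m + 1)
          + ∑ j ∈ Finset.univ.erase i,
              (-4) * ((1 - z j ^ 2) * z j ^ (m + 1) / (z i - z j) ^ 2))
          * Real.sqrt (1 - z i ^ 2) := by
      rw [hS]
      simp only [Matrix.mulVec, dotProduct, Matrix.of_apply]
      rw [← Finset.add_sum_erase _ _ (Finset.mem_univ i), if_pos rfl]
      have hoff : ∀ j ∈ Finset.univ.erase i,
          (if i = j then
            4 * (∑ l ∈ Finset.univ.erase j, (1 - z j ^ 2) / (z j - z l) ^ 2) +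
              2 * (α + 1) * ((1 + z j) / (1 - z j)) + 2 * (β + 1) * ((1 - z j) / (1 + z j))
          else -4 * Real.sqrt ((1 - z i ^ 2) * (1 - z j ^ 2)) / (z i - z j) ^ 2)
            * (z j ^ (m + 1) * Real.sqrt (1 - z j ^ 2))
          = ((-4) * ((1 - z j ^ 2) * z j ^ (m + 1) / (z i - z j) ^ 2))
              * Real.sqrt (1 - z i ^ 2) := by
        intro j hj
        have hij : i ≠ j := fun h => (Finset.ne_of_mem_erase hj) h.symm
        rw [if_neg hij, Real.sqrt_mul hx2.le]
        have hD : z i - z j ≠ 0 := hne j hj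
        linear_combination (-4 * Real.sqrt (1 - z i ^ 2) * z j ^ (m + 1) / (z i - z j) ^ 2)
          * (Real.mul_self_sqrt (hzj2 j).le)

      rw [Finset.sum_congr rfl hoff, ← Finset.sum_mul]
      generalize (∑ l ∈ Finset.univ.erase i, (1 - z i ^ 2) / (z i - z l) ^ 2) = SA
      generalize (∑ j ∈ Finset.univ.erase i,
        (-4) * ((1 - z j ^ 2) * z j ^ (m + 1) / (z i - z j) ^ 2)) = SB
      ring
    rw [hmv]
    -- step 2 : the scalar identity
    have key := ode_at_roots hN2 hα hβ P hPdeg hPorth hPne z hzinj hzroot i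
    have hσ : (∑ j ∈ Finset.univ.erase i, (z i - z j)⁻¹)
        = (α - β + (α + β + 2) * z i) / (2 * (1 - z i ^ 2)) := by
      rw [eq_div_iff (by positivity)]
      linarith [key]
    have hstep1 : ∀ j ∈ Finset.univ.erase i,
        4 * ((1 - z i ^ 2) / (z i - z j) ^ 2) * z i ^ (m + 1)
          + (-4) * ((1 - z j ^ 2) * z j ^ (m + 1) / (z i - z j) ^ 2)
        = (4 * (((m:ℝ) + 1) * z i ^ m - ((m:ℝ) + 3) * z i ^ (m + 2))) * (z i - z j)⁻¹
          - 4 * (Kp m (z i) (z j) - Kp (m + 2) (z i) (z j)) := by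
      intro j hj
      have hD := hne j hj
      have e1 := pow_ident m (z i) (z j)
      have e2 := pow_ident (m + 2) (z i) (z j)
      push_cast at e1 e2
      have k1 : Kp m (z i) (z j) = (((m:ℝ) + 1) * z i ^ m * (z i - z j)
          - (z i ^ (m + 1) - z j ^ (m + 1))) / (z i - z j) ^ 2 := by
        rw [eq_div_iff (pow_ne_zero 2 hD)]; linear_combination e1
      have k2 : Kp (m + 2) (z i) (z j) = (((m:ℝ) + 3) * z i ^ (m + 2) * (z i - z j)
          - (z i ^ (m + 3) - z j ^ (m + 3))) / (z i - z j) ^ 2 := by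
        rw [eq_div_iff (pow_ne_zero 2 hD)]; linear_combination e2
      rw [k1, k2]
      field_simp
      ring
    have hT : (4 * (∑ l ∈ Finset.univ.erase i, (1 - z i ^ 2) / (z i - z l) ^ 2)
            + 2 * (α + 1) * ((1 + z i) / (1 - z i))
            + 2 * (β + 1) * ((1 - z i) / (1 + z i))) * z i ^ (m + 1)
          + ∑ j ∈ Finset.univ.erase i,
              (-4) * ((1 - z j ^ 2) * z j ^ (m + 1) / (z i - z j) ^ 2)
        = 2 * ((m:ℝ) + 2) * (2 * (N : ℝ) + α + β + 1 - ((m:ℝ) + 2)) * z i ^ (m + 1)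
          + Polynomial.eval (z i) (Polynomial.C (2 * ((m:ℝ) + 1) * (α - β)) * Polynomial.X ^ m
            + Polynomial.C (2 * ((m:ℝ) + 1) * (m:ℝ)) * Polynomial.X ^ (m - 1)
            - Polynomial.C 4 * (∑ t ∈ Finset.range m,
                Polynomial.C (((t:ℝ) + 1) * (∑ j : Fin N, z j ^ (m - 1 - t))) * Polynomial.X ^ t)
            + Polynomial.C 4 * (∑ t ∈ Finset.range (m + 1),
                Polynomial.C (((t:ℝ) + 1) * (∑ j : Fin N, z j ^ (m + 1 - t)))
                  * Polynomial.X ^ t)) := by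
      have hcomb : (4 * (∑ l ∈ Finset.univ.erase i, (1 - z i ^ 2) / (z i - z l) ^ 2)
            + 2 * (α + 1) * ((1 + z i) / (1 - z i))
            + 2 * (β + 1) * ((1 - z i) / (1 + z i))) * z i ^ (m + 1)
          + ∑ j ∈ Finset.univ.erase i,
              (-4) * ((1 - z j ^ 2) * z j ^ (m + 1) / (z i - z j) ^ 2)
          = (∑ j ∈ Finset.univ.erase i,
              (4 * ((1 - z i ^ 2) / (z i - z j) ^ 2) * z i ^ (m + 1)
                + (-4) * ((1 - z j ^ 2) * z j ^ (m + 1) / (z i - z j) ^ 2)))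
            + (2 * (α + 1) * ((1 + z i) / (1 - z i))
              + 2 * (β + 1) * ((1 - z i) / (1 + z i))) * z i ^ (m + 1) := by
        have hpull : ∑ j ∈ Finset.univ.erase i,
            4 * ((1 - z i ^ 2) / (z i - z j) ^ 2) * z i ^ (m + 1)
            = 4 * (∑ l ∈ Finset.univ.erase i, (1 - z i ^ 2) / (z i - z l) ^ 2)
              * z i ^ (m + 1) := by
          rw [Finset.mul_sum, Finset.sum_mul]
        rw [Finset.sum_add_distrib, hpull]
        ring
      rw [hcomb, Finset.sum_congr rfl hstep1, Finset.sum_sub_distrib,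
        ← Finset.mul_sum, ← Finset.mul_sum, hσ]
      rw [Finset.sum_sub_distrib, Finset.sum_erase_eq_sub (Finset.mem_univ i),
        Finset.sum_erase_eq_sub (Finset.mem_univ i)]
      rw [Kp_sum, Kp_sum, Kp_diag, Kp_diag]
      simp only [show m + 2 - 1 = m + 1 from rfl]
      rw [Finset.sum_range_succ (fun t => (((t:ℝ) + 1) * (∑ j : Fin N, z j ^ (m + 1 - t)))
        * z i ^ t) (m + 1)]
      simp only [Nat.sub_self, pow_zero]
      rw [show (∑ _j : Fin N, (1:ℝ)) = (N : ℝ) by simp [Finset.card_univ]]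
      simp only [Polynomial.eval_add, Polynomial.eval_sub, Polynomial.eval_mul,
        Polynomial.eval_C, Polynomial.eval_pow, Polynomial.eval_X, Polynomial.eval_finset_sum]
      push_cast
      field_simp
      ring
    rw [hT]
    push_cast
    ring
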